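/- arXiv:2308.02127 — 2 statements merged into one kernel-verified Lean document; each statement's English description precedes it below -/
import Mathlib

section
/- Let F_n be the friendship graph on 2n+1 vertices with n ≥ 2. Then γ_tc(M(F_n)) = 2n + 1. -/
open SimpleGraph

/-- The middle graph `M(G)`: vertices are `V(G) ⊕ E(G)`; an edge-vertex is adjacent to
another edge-vertex iff the edges are distinct and share an endpoint, and a vertex is
adjacent to an edge iff it is incident to it. -/
def middleGraph {V : Type*} (G : SimpleGraph V) : SimpleGraph (V ⊕ G.edgeSet) where
  Adj x y :=
    match x, y with
    | Sum.inl _, Sum.inl _ => False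
    | Sum.inl v, Sum.inr e => v ∈ (e : Sym2 V)
    | Sum.inr e, Sum.inl v => v ∈ (e : Sym2 V)
    | Sum.inr e, Sum.inr f => e ≠ f ∧ ∃ v, v ∈ (e : Sym2 V) ∧ v ∈ (f : Sym2 V)
  symm := by
    constructor
    rintro (v|e) (w|f) h
    · exact h
    · exact h
    · exact h
    · exact ⟨h.1.symm, h.2.imp fun v hv => ⟨hv.2, hv.1⟩⟩
  loopless := by
    constructor
    rintro (v|e) h
    · exact h
    · exact h.1 rfl

/-- `D` is a total dominating set of `G`: every vertex has a neighbour in `D`. -/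
def IsTotalDomSet {V : Type*} (G : SimpleGraph V) (D : Set V) : Prop :=
  ∀ v : V, ∃ u ∈ D, G.Adj v u

/-- `D` is a total outer-connected dominating set of `G`: it is total dominating and
the subgraph induced on the complement of `D` is connected. -/
def IsTOCDomSet {V : Type*} (G : SimpleGraph V) (D : Set V) : Prop :=
  IsTotalDomSet G D ∧ (G.induce Dᶜ).Connected

/-- The total domination number `γₜ(G)`. -/
noncomputable def totalDomNum {V : Type*} (G : SimpleGraph V) : ℕ :=
  sInf {k | ∃ D : Set V, IsTotalDomSet G D ∧ D.ncard = k}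

/-- The total outer-connected domination number `γ_tc(G)`. -/
noncomputable def tocDomNum {V : Type*} (G : SimpleGraph V) : ℕ :=
  sInf {k | ∃ D : Set V, IsTOCDomSet G D ∧ D.ncard = k}

/-- The set of leaves (vertices of degree 1) of `G`. -/
def leafSet {V : Type*} (G : SimpleGraph V) : Set V :=
  {v | ∃ u, G.neighborSet v = {u}}

/-- The wheel graph with hub `none` and rim cycle on `Fin n`. -/
def wheelGraph (n : ℕ) : SimpleGraph (Option (Fin n)) where
  Adj x y :=
    match x, y with
    | none, none => False
    | none, some _ => True
    | some _, none => True
    | some i, some j => (SimpleGraph.cycleGraph n).Adj i j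
  symm := by
    constructor
    rintro (_|i) (_|j) h
    · exact h
    · exact h
    · exact h
    · exact (SimpleGraph.cycleGraph n).adj_symm h
  loopless := by
    constructor
    rintro (_|i) h
    · exact h
    · exact (SimpleGraph.cycleGraph n).loopless.irrefl i h

/-- The corona `G ∘ K₁`: to each vertex `a` of `G` (copy `Sum.inl a`) a pendant
vertex `Sum.inr a` is attached. -/
def corona {V : Type*} (G : SimpleGraph V) : SimpleGraph (V ⊕ V) where
  Adj x y :=
    match x, y with
    | Sum.inl a, Sum.inl b => G.Adj a b
    | Sum.inl a, Sum.inr b => a = b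
    | Sum.inr a, Sum.inl b => a = b
    | Sum.inr _, Sum.inr _ => False
  symm := by
    constructor
    rintro (a|a) (b|b) h
    · exact G.adj_symm h
    · exact h.symm
    · exact h.symm
    · exact h
  loopless := by
    constructor
    rintro (a|a) h
    · exact G.loopless.irrefl a h
    · exact h

/-- The 2-corona `G ∘ P₂`: to each vertex `a` of `G` (copy `Sum.inl a`) a path
`Sum.inl a — Sum.inr (Sum.inl a) — Sum.inr (Sum.inr a)` of length 2 is attached. -/
def corona2 {V : Type*} (G : SimpleGraph V) : SimpleGraph (V ⊕ V ⊕ V) where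
  Adj x y :=
    match x, y with
    | Sum.inl a, Sum.inl b => G.Adj a b
    | Sum.inl a, Sum.inr (Sum.inl b) => a = b
    | Sum.inr (Sum.inl a), Sum.inl b => a = b
    | Sum.inr (Sum.inl a), Sum.inr (Sum.inr b) => a = b
    | Sum.inr (Sum.inr a), Sum.inr (Sum.inl b) => a = b
    | _, _ => False
  symm := by
    constructor
    rintro (a|a|a) (b|b|b) h <;> first | exact G.symm h | exact h.symm | exact h
  loopless := by
    constructor
    rintro (a|a|a) h
    · exact G.loopless.irrefl a h
    · exact h
    · exact h

/-- The spider `S_{1,n,n}`: hub `none`, middle vertices `some (.inl i)`,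
leaves `some (.inr i)`; the star `K_{1,n}` with every edge subdivided once. -/
def spiderGraph (n : ℕ) : SimpleGraph (Option (Fin n ⊕ Fin n)) where
  Adj x y :=
    match x, y with
    | none, some (Sum.inl _) => True
    | some (Sum.inl _), none => True
    | some (Sum.inl i), some (Sum.inr j) => i = j
    | some (Sum.inr i), some (Sum.inl j) => i = j
    | _, _ => False
  symm := by
    constructor
    rintro (_|i|i) (_|j|j) h <;> first | exact h.symm | exact h
  loopless := by
    constructor
    rintro (_|i|i) h <;> exact h

/-- The friendship graph `Fₙ`: `n` triangles sharing the common vertex `none`. -/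
def friendshipGraph (n : ℕ) : SimpleGraph (Option (Fin n × Fin 2)) where
  Adj x y :=
    match x, y with
    | none, some _ => True
    | some _, none => True
    | some (i, a), some (j, b) => i = j ∧ a ≠ b
    | none, none => False
  symm := by
    constructor
    rintro (_|⟨i,a⟩) (_|⟨j,b⟩) h <;> first | exact ⟨h.1.symm, h.2.symm⟩ | exact h
  loopless := by
    constructor
    rintro (_|⟨i,a⟩) h
    · exact h
    · exact h.2 rfl

namespace Stmt18Aux

variable {n : ℕ}

abbrev FV (n : ℕ) := Option (Fin n × Fin 2)

def spokeSym (i : Fin n) (a : Fin 2) : Sym2 (FV n) := s(none, some (i,a))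
def outerSym (i : Fin n) : Sym2 (FV n) := s(some (i,0), some (i,1))

lemma spokeSym_mem (i : Fin n) (a : Fin 2) : spokeSym i a ∈ (friendshipGraph n).edgeSet := by
  show (friendshipGraph n).Adj none (some (i,a))
  trivial

lemma outerSym_mem (i : Fin n) : outerSym i ∈ (friendshipGraph n).edgeSet := by
  show (friendshipGraph n).Adj (some (i,0)) (some (i,1))
  exact ⟨rfl, by decide⟩

def spokeE (i : Fin n) (a : Fin 2) : (friendshipGraph n).edgeSet := ⟨spokeSym i a, spokeSym_mem i a⟩
def outerE (i : Fin n) : (friendshipGraph n).edgeSet := ⟨outerSym i, outerSym_mem i⟩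

lemma edge_cases (e : (friendshipGraph n).edgeSet) :
    (∃ i a, e = spokeE i a) ∨ (∃ i, e = outerE i) := by
  obtain ⟨q, hq⟩ := e
  revert hq
  induction q using Sym2.ind with
  | _ x y =>
    intro hq
    match x, y, (SimpleGraph.mem_edgeSet _).mp hq with
    | none, some (i,a), _ => exact Or.inl ⟨i, a, rfl⟩
    | some (i,a), none, _ =>
      exact Or.inl ⟨i, a, Subtype.ext (Sym2.eq_swap)⟩
    | some (i,a), some (j,b), ⟨hij, hab⟩ =>
      subst hij
      right
      refine ⟨i, Subtype.ext ?_⟩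
      fin_cases a <;> fin_cases b <;> first
        | exact absurd rfl hab
        | rfl
        | exact Sym2.eq_swap

lemma mem_spokeSym {v : FV n} {i a} : v ∈ spokeSym i a ↔ v = none ∨ v = some (i,a) :=
  Sym2.mem_iff

lemma mem_outerSym {v : FV n} {i} : v ∈ outerSym i ↔ v = some (i,0) ∨ v = some (i,1) :=
  Sym2.mem_iff

lemma spokeE_inj {i j : Fin n} {a b : Fin 2} : spokeE i a = spokeE j b ↔ i = j ∧ a = b := by
  constructor
  · intro h
    have h2 := Subtype.ext_iff.mp h
    simp only [spokeE, spokeSym, Sym2.eq_iff] at h2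
    rcases h2 with ⟨-, h2⟩ | ⟨h2, -⟩ <;> simp_all
  · rintro ⟨rfl, rfl⟩; rfl

lemma outerE_inj {i j : Fin n} : outerE i = outerE j ↔ i = j := by
  constructor
  · intro h
    have h2 := Subtype.ext_iff.mp h
    simp only [outerE, outerSym, Sym2.eq_iff] at h2
    rcases h2 with ⟨h2, -⟩ | ⟨h2, -⟩ <;> simp_all
  · rintro rfl; rfl

lemma spokeE_ne_outerE {i j : Fin n} {a : Fin 2} : spokeE i a ≠ outerE j := by
  intro h
  have h2 := Subtype.ext_iff.mp h
  simp only [spokeE, outerE, spokeSym, outerSym, Sym2.eq_iff] at h2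
  rcases h2 with ⟨h2, -⟩ | ⟨h2, -⟩ <;> simp_all

abbrev MFG (n : ℕ) := middleGraph (friendshipGraph n)
abbrev FW (n : ℕ) := FV n ⊕ (friendshipGraph n).edgeSet

lemma madj_inl_inr {v : FV n} {e} : (MFG n).Adj (Sum.inl v) (Sum.inr e) ↔ v ∈ (e : Sym2 (FV n)) :=
  Iff.rfl

lemma madj_inr_inl {v : FV n} {e} : (MFG n).Adj (Sum.inr e) (Sum.inl v) ↔ v ∈ (e : Sym2 (FV n)) :=
  Iff.rfl

lemma madj_inr_inr {e f : (friendshipGraph n).edgeSet} :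
    (MFG n).Adj (Sum.inr e) (Sum.inr f) ↔
      e ≠ f ∧ ∃ v, v ∈ (e : Sym2 (FV n)) ∧ v ∈ (f : Sym2 (FV n)) :=
  Iff.rfl

lemma not_madj_inl_inl {v w : FV n} : ¬ (MFG n).Adj (Sum.inl v) (Sum.inl w) := fun h => h

/-- Neighbours of the hub vertex are exactly the spoke edge-vertices. -/
lemma nbr_hub {w : FW n} (h : (MFG n).Adj (Sum.inl none) w) :
    ∃ i a, w = Sum.inr (spokeE i a) := by
  match w with
  | Sum.inl v => exact absurd h not_madj_inl_inl
  | Sum.inr e =>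
    rcases edge_cases e with ⟨i, a, rfl⟩ | ⟨i, rfl⟩
    · exact ⟨i, a, rfl⟩
    · exact absurd (mem_outerSym.mp (madj_inl_inr.mp h)) (by simp)

/-- Neighbours of an outer vertex `v_{i,a}`. -/
lemma nbr_outerV {i : Fin n} {a : Fin 2} {w : FW n}
    (h : (MFG n).Adj (Sum.inl (some (i,a))) w) :
    w = Sum.inr (spokeE i a) ∨ w = Sum.inr (outerE i) := by
  match w with
  | Sum.inl v => exact absurd h not_madj_inl_inl
  | Sum.inr e =>
    rcases edge_cases e with ⟨j, b, rfl⟩ | ⟨j, rfl⟩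
    · left
      rcases mem_spokeSym.mp (madj_inl_inr.mp h) with h2 | h2 <;> simp_all
    · right
      rcases mem_outerSym.mp (madj_inl_inr.mp h) with h2 | h2 <;> simp_all

lemma outer_mem_fst {j : Fin n} {p : Fin n × Fin 2} (h : some p ∈ outerSym j) : p.1 = j := by
  rcases mem_outerSym.mp h with h2 | h2 <;> simp_all

/-- Neighbours of the outer-edge vertex `f_i`. -/
lemma nbr_outerE {i : Fin n} {w : FW n} (h : (MFG n).Adj (Sum.inr (outerE i)) w) :
    w = Sum.inl (some (i,0)) ∨ w = Sum.inl (some (i,1)) ∨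
      w = Sum.inr (spokeE i 0) ∨ w = Sum.inr (spokeE i 1) := by
  match w with
  | Sum.inl v =>
    rcases mem_outerSym.mp (madj_inr_inl.mp h) with h2 | h2
    · exact Or.inl (by rw [h2])
    · exact Or.inr (Or.inl (by rw [h2]))
  | Sum.inr e =>
    obtain ⟨hne, v, hv1, hv2⟩ := madj_inr_inr.mp h
    rcases edge_cases e with ⟨j, b, rfl⟩ | ⟨j, rfl⟩
    · rcases mem_spokeSym.mp hv2 with h3 | h3
      · rcases mem_outerSym.mp hv1 with h2 | h2 <;> simp_all
      · subst h3
        rcases mem_outerSym.mp hv1 with h2 | h2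
        · obtain ⟨rfl, rfl⟩ : j = i ∧ b = 0 := by simpa [Prod.ext_iff] using h2
          exact Or.inr (Or.inr (Or.inl rfl))
        · obtain ⟨rfl, rfl⟩ : j = i ∧ b = 1 := by simpa [Prod.ext_iff] using h2
          exact Or.inr (Or.inr (Or.inr rfl))
    · obtain ⟨p, rfl⟩ : ∃ p, v = some p := by
        rcases mem_outerSym.mp hv1 with h2 | h2 <;> exact ⟨_, h2⟩
      have hi : p.1 = i := outer_mem_fst hv1
      have hj : p.1 = j := outer_mem_fst hv2
      exact absurd (outerE_inj.mpr (hi.symm.trans hj)) hne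

def triFun (x y : FV n) : Fin n ⊕ Unit :=
  match x, y with
  | none, none => Sum.inr ()
  | none, some p => Sum.inl p.1
  | some p, none => Sum.inl p.1
  | some p, some q => Sum.inl (max p.1 q.1)

lemma triFun_symm (x y : FV n) : triFun x y = triFun y x := by
  cases x <;> cases y <;> simp [triFun, max_comm]

/-- The triangle-index projection. -/
def tri (w : FW n) : Fin n ⊕ Unit :=
  match w with
  | Sum.inl none => Sum.inr ()
  | Sum.inl (some p) => Sum.inl p.1
  | Sum.inr e => Sym2.lift ⟨triFun, triFun_symm⟩ (e : Sym2 (FV n))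

@[simp] lemma tri_hub : tri (Sum.inl none : FW n) = Sum.inr () := rfl

@[simp] lemma tri_outerV (i : Fin n) (a : Fin 2) :
    tri (Sum.inl (some (i,a)) : FW n) = Sum.inl i := rfl

@[simp] lemma tri_spokeE (i : Fin n) (a : Fin 2) :
    tri (Sum.inr (spokeE i a) : FW n) = Sum.inl i := rfl

@[simp] lemma tri_outerE (i : Fin n) :
    tri (Sum.inr (outerE i) : FW n) = Sum.inl i := by
  show Sum.inl (max i i) = Sum.inl i
  rw [max_self]

section Lower

variable {D : Set (FW n)}

lemma two_in_fiber (hdom : IsTotalDomSet (MFG n) D) (i : Fin n) :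
    ∃ x y : FW n, x ∈ D ∧ y ∈ D ∧ x ≠ y ∧ tri x = Sum.inl i ∧ tri y = Sum.inl i := by
  obtain ⟨u0, hu0D, hadj0⟩ := hdom (Sum.inl (some (i,0)))
  obtain ⟨u1, hu1D, hadj1⟩ := hdom (Sum.inl (some (i,1)))
  have hc0 := nbr_outerV hadj0
  have hc1 := nbr_outerV hadj1
  rcases hc1 with rfl | rfl
  · rcases hc0 with rfl | rfl
    · exact ⟨_, _, hu0D, hu1D,
        by intro h; exact absurd (spokeE_inj.mp (Sum.inr_injective h)).2 (by decide),
        tri_spokeE i 0, tri_spokeE i 1⟩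
    · exact ⟨_, _, hu0D, hu1D,
        by intro h; exact spokeE_ne_outerE (Sum.inr_injective h).symm,
        tri_outerE i, tri_spokeE i 1⟩
  · obtain ⟨z, hzD, hadjz⟩ := hdom (Sum.inr (outerE i))
    have hz4 := nbr_outerE hadjz
    refine ⟨Sum.inr (outerE i), z, hu1D, hzD, ?_, tri_outerE i, ?_⟩
    · rcases hz4 with rfl | rfl | rfl | rfl
      · simp
      · simp
      · intro h; exact spokeE_ne_outerE (Sum.inr_injective h).symm
      · intro h; exact spokeE_ne_outerE (Sum.inr_injective h).symm
    · rcases hz4 with rfl | rfl | rfl | rfl <;> simp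

lemma walk_closed {S : Set (FW n)}
    (hS : ∀ x ∈ S, x ∈ Dᶜ → ∀ y, y ∈ Dᶜ → (MFG n).Adj x y → y ∈ S) :
    ∀ (a b : ↥(Dᶜ)), ((MFG n).induce Dᶜ).Walk a b → ↑a ∈ S → ↑b ∈ S := by
  intro a b w
  induction w with
  | nil => exact id
  | @cons x u y h p ih =>
    intro hx
    exact ih (hS _ hx x.2 _ u.2 h)

lemma no_spoke_in_D (hdom : IsTotalDomSet (MFG n) D)
    (hconn : ((MFG n).induce Dᶜ).Connected) (hv0 : (Sum.inl none : FW n) ∉ D) (i : Fin n)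
    (hno3 : ∀ x y z : FW n, x ∈ D → y ∈ D → z ∈ D → tri x = Sum.inl i → tri y = Sum.inl i →
      tri z = Sum.inl i → x = y ∨ x = z ∨ y = z)
    (a : Fin 2) : (Sum.inr (spokeE i a) : FW n) ∉ D := by
  intro hs
  by_cases houter : (Sum.inr (outerE i) : FW n) ∈ D
  · have hvD : (Sum.inl (some (i,a)) : FW n) ∉ D := by
      intro hv
      rcases hno3 _ _ _ hs houter hv (tri_spokeE i a) (tri_outerE i) (tri_outerV i a)
        with h | h | h
      · exact spokeE_ne_outerE (Sum.inr_injective h)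
      · simp at h
      · simp at h
    obtain ⟨w⟩ := hconn.preconnected ⟨Sum.inl (some (i,a)), hvD⟩ ⟨Sum.inl none, hv0⟩
    have hlast := walk_closed (S := {Sum.inl (some (i,a))}) ?_ _ _ w rfl
    · simp at hlast
    · intro x hx hxD y hyD hadj
      rw [Set.mem_singleton_iff] at hx; subst hx
      rcases nbr_outerV hadj with rfl | rfl
      · exact absurd hs hyD
      · exact absurd houter hyD
  · have hs0 : (Sum.inr (spokeE i 0) : FW n) ∈ D := by
      obtain ⟨u, huD, hadj⟩ := hdom (Sum.inl (some (i,0)))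
      rcases nbr_outerV hadj with rfl | rfl
      · exact huD
      · exact absurd huD houter
    have hs1 : (Sum.inr (spokeE i 1) : FW n) ∈ D := by
      obtain ⟨u, huD, hadj⟩ := hdom (Sum.inl (some (i,1)))
      rcases nbr_outerV hadj with rfl | rfl
      · exact huD
      · exact absurd huD houter
    have hvD : ∀ b : Fin 2, (Sum.inl (some (i,b)) : FW n) ∉ D := by
      intro b hv
      rcases hno3 _ _ _ hs0 hs1 hv (tri_spokeE i 0) (tri_spokeE i 1) (tri_outerV i b)
        with h | h | h
      · exact absurd (spokeE_inj.mp (Sum.inr_injective h)).2 (by decide)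
      · simp at h
      · simp at h
    obtain ⟨w⟩ := hconn.preconnected ⟨Sum.inr (outerE i), houter⟩ ⟨Sum.inl none, hv0⟩
    have hlast := walk_closed
      (S := {Sum.inl (some (i,0)), Sum.inl (some (i,1)), Sum.inr (outerE i)}) ?_ _ _ w
      (by simp)
    · simp at hlast
    · intro x hx hxD y hyD hadj
      simp only [Set.mem_insert_iff, Set.mem_singleton_iff] at hx
      rcases hx with rfl | rfl | rfl
      · rcases nbr_outerV hadj with rfl | rfl
        · exact absurd hs0 hyD
        · simp
      · rcases nbr_outerV hadj with rfl | rfl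
        · exact absurd hs1 hyD
        · simp
      · rcases nbr_outerE hadj with rfl | rfl | rfl | rfl
        · simp
        · simp
        · exact absurd hs0 hyD
        · exact absurd hs1 hyD

lemma lower_bound (hD : IsTOCDomSet (MFG n) D) : 2 * n + 1 ≤ D.ncard := by
  classical
  obtain ⟨hdom, hconn⟩ := hD
  haveI : Fintype (FW n) := Fintype.ofFinite _
  haveI : Fintype ↥D := Fintype.ofFinite _
  rw [Set.ncard_eq_toFinset_card' D]
  have hfib : D.toFinset.card =
      ∑ t : Fin n ⊕ Unit, (D.toFinset.filter (fun x => tri x = t)).card :=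
    Finset.card_eq_sum_card_fiberwise (fun x _ => Finset.mem_univ _)
  have hbase : ∀ t : Fin n ⊕ Unit,
      Sum.elim (fun _ => 2) (fun _ => 0) t ≤ (D.toFinset.filter (fun x => tri x = t)).card := by
    rintro (i | u)
    · obtain ⟨x, y, hx, hy, hxy, hxt, hyt⟩ := two_in_fiber hdom i
      exact Finset.one_lt_card.mpr
        ⟨x, by simp [Finset.mem_filter, Set.mem_toFinset, hx, hxt],
         y, by simp [Finset.mem_filter, Set.mem_toFinset, hy, hyt], hxy⟩
    · exact Nat.zero_le _
  have hstrict : ∃ t : Fin n ⊕ Unit,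
      Sum.elim (fun _ => 2) (fun _ => 0) t < (D.toFinset.filter (fun x => tri x = t)).card := by
    by_cases hv0 : (Sum.inl none : FW n) ∈ D
    · exact ⟨Sum.inr (), Finset.card_pos.mpr
        ⟨Sum.inl none, by simp [Finset.mem_filter, Set.mem_toFinset, hv0]⟩⟩
    · by_contra hc
      push_neg at hc
      obtain ⟨u, huD, hadj⟩ := hdom (Sum.inl none)
      obtain ⟨i, a, rfl⟩ := nbr_hub hadj
      refine no_spoke_in_D hdom hconn hv0 i ?_ a huD
      intro x y z hx hy hz hxt hyt hzt
      by_contra hne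
      push_neg at hne
      have h3 : 2 < (D.toFinset.filter (fun w => tri w = Sum.inl i)).card :=
        Finset.two_lt_card.mpr
          ⟨x, by simp [Finset.mem_filter, Set.mem_toFinset, hx, hxt],
           y, by simp [Finset.mem_filter, Set.mem_toFinset, hy, hyt],
           z, by simp [Finset.mem_filter, Set.mem_toFinset, hz, hzt],
           hne.1, hne.2.1, hne.2.2⟩
      have := hc (Sum.inl i)
      simp only [Sum.elim_inl] at this
      omega
  have hsum : ∑ t : Fin n ⊕ Unit, Sum.elim (fun _ => 2) (fun _ => 0) t = 2 * n := by
    rw [Fintype.sum_sum_type]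
    simp [Finset.sum_const, Finset.card_univ, mul_comm]
  obtain ⟨t0, ht0⟩ := hstrict
  have hlt := Finset.sum_lt_sum (s := Finset.univ)
    (f := Sum.elim (fun _ => 2) (fun _ => 0))
    (g := fun t => (D.toFinset.filter (fun x => tri x = t)).card)
    (fun t _ => hbase t) ⟨t0, Finset.mem_univ t0, ht0⟩
  rw [hsum] at hlt
  have hlt2 : 2 * n < D.toFinset.card := by rw [hfib]; exact hlt
  omega

end Lower

section Upper

@[simp] lemma spokeE_eq_spokeE {i j : Fin n} {a b : Fin 2} :
    spokeE i a = spokeE j b ↔ i = j ∧ a = b := spokeE_inj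

@[simp] lemma spokeE_eq_outerE' {i j : Fin n} {a : Fin 2} :
    spokeE i a = outerE j ↔ False := iff_false_intro spokeE_ne_outerE

@[simp] lemma outerE_eq_spokeE' {i j : Fin n} {a : Fin 2} :
    outerE j = spokeE i a ↔ False := iff_false_intro (fun h => spokeE_ne_outerE h.symm)

@[simp] lemma outerE_eq_outerE {i j : Fin n} : outerE i = outerE j ↔ i = j := outerE_inj

/-- The witness dominating set for the upper bound. -/
def UD (n : ℕ) (i0 : Fin n) : Set (FW n) :=
  (Set.range fun i : Fin n => (Sum.inl (some (i, (0 : Fin 2))) : FW n)) ∪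
    ((Set.range fun i : Fin n => (Sum.inr (outerE i) : FW n)) ∪ {Sum.inr (spokeE i0 0)})

lemma mem_UD {i0 : Fin n} {w : FW n} :
    w ∈ UD n i0 ↔ (∃ i : Fin n, w = Sum.inl (some (i, (0:Fin 2)))) ∨
      (∃ i : Fin n, w = Sum.inr (outerE i)) ∨ w = Sum.inr (spokeE i0 0) := by
  simp only [UD, Set.mem_union, Set.mem_range, Set.mem_singleton_iff]
  constructor
  · rintro (⟨i, rfl⟩ | ⟨i, rfl⟩ | h)
    · exact Or.inl ⟨i, rfl⟩
    · exact Or.inr (Or.inl ⟨i, rfl⟩)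
    · exact Or.inr (Or.inr h)
  · rintro (⟨i, rfl⟩ | ⟨i, rfl⟩ | h)
    · exact Or.inl ⟨i, rfl⟩
    · exact Or.inr (Or.inl ⟨i, rfl⟩)
    · exact Or.inr (Or.inr h)

lemma UD_ncard (i0 : Fin n) : (UD n i0).ncard = 2 * n + 1 := by
  have hinj1 : Function.Injective (fun i : Fin n => (Sum.inl (some (i, (0:Fin 2))) : FW n)) := by
    intro a b h
    simpa using h
  have hinj2 : Function.Injective (fun i : Fin n => (Sum.inr (outerE i) : FW n)) := by
    intro a b h
    exact outerE_inj.mp (Sum.inr_injective h)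
  have h1 : (Set.range fun i : Fin n => (Sum.inl (some (i, (0:Fin 2))) : FW n)).ncard = n := by
    rw [← Set.image_univ, Set.ncard_image_of_injective _ hinj1, Set.ncard_univ,
      Nat.card_eq_fintype_card, Fintype.card_fin]
  have h2 : (Set.range fun i : Fin n => (Sum.inr (outerE i) : FW n)).ncard = n := by
    rw [← Set.image_univ, Set.ncard_image_of_injective _ hinj2, Set.ncard_univ,
      Nat.card_eq_fintype_card, Fintype.card_fin]
  have hd23 : Disjoint (Set.range fun i : Fin n => (Sum.inr (outerE i) : FW n))
      ({Sum.inr (spokeE i0 0)} : Set (FW n)) := by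
    rw [Set.disjoint_singleton_right]
    rintro ⟨i, h⟩
    exact spokeE_ne_outerE (Sum.inr_injective h).symm
  have hd1 : Disjoint (Set.range fun i : Fin n => (Sum.inl (some (i, (0:Fin 2))) : FW n))
      ((Set.range fun i : Fin n => (Sum.inr (outerE i) : FW n)) ∪ {Sum.inr (spokeE i0 0)}) := by
    rw [Set.disjoint_left]
    rintro x ⟨i, rfl⟩ (⟨j, h⟩ | h)
    · exact absurd h (by simp)
    · exact absurd h (by simp)
  rw [UD, Set.ncard_union_eq hd1 (Set.toFinite _) (Set.toFinite _),
    Set.ncard_union_eq hd23 (Set.toFinite _) (Set.toFinite _), h1, h2, Set.ncard_singleton]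
  omega

lemma UD_totalDom (i0 : Fin n) : IsTotalDomSet (MFG n) (UD n i0) := by
  intro v
  match v with
  | Sum.inl none =>
    refine ⟨Sum.inr (spokeE i0 0), mem_UD.mpr (Or.inr (Or.inr rfl)), ?_⟩
    exact madj_inl_inr.mpr (mem_spokeSym.mpr (Or.inl rfl))
  | Sum.inl (some (i, a)) =>
    refine ⟨Sum.inr (outerE i), mem_UD.mpr (Or.inr (Or.inl ⟨i, rfl⟩)), ?_⟩
    refine madj_inl_inr.mpr (mem_outerSym.mpr ?_)
    fin_cases a
    · exact Or.inl rfl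
    · exact Or.inr rfl
  | Sum.inr e =>
    rcases edge_cases e with ⟨i, a, rfl⟩ | ⟨i, rfl⟩
    · refine ⟨Sum.inr (outerE i), mem_UD.mpr (Or.inr (Or.inl ⟨i, rfl⟩)), ?_⟩
      refine madj_inr_inr.mpr ⟨spokeE_ne_outerE, some (i, a), mem_spokeSym.mpr (Or.inr rfl), ?_⟩
      refine mem_outerSym.mpr ?_
      fin_cases a
      · exact Or.inl rfl
      · exact Or.inr rfl
    · refine ⟨Sum.inl (some (i, 0)), mem_UD.mpr (Or.inl ⟨i, rfl⟩), ?_⟩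
      exact madj_inr_inl.mpr (mem_outerSym.mpr (Or.inl rfl))

lemma UD_conn (i0 : Fin n) : ((MFG n).induce (UD n i0)ᶜ).Connected := by
  have hub_mem : (Sum.inl none : FW n) ∈ (UD n i0)ᶜ := by
    rw [Set.mem_compl_iff, mem_UD]
    simp
  have reach_hub : ∀ x : ↥((UD n i0)ᶜ),
      ((MFG n).induce (UD n i0)ᶜ).Reachable x ⟨Sum.inl none, hub_mem⟩ := by
    rintro ⟨w, hw⟩
    match w with
    | Sum.inl none => exact Reachable.refl _
    | Sum.inl (some (i, a)) =>
      have hw' := hw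
      rw [Set.mem_compl_iff, mem_UD] at hw'
      fin_cases a
      · exact absurd (Or.inl ⟨i, rfl⟩) hw'
      · have hsp : (Sum.inr (spokeE i 1) : FW n) ∈ (UD n i0)ᶜ := by
          rw [Set.mem_compl_iff, mem_UD]
          simp
        have adj1 : ((MFG n).induce (UD n i0)ᶜ).Adj ⟨Sum.inl (some (i, 1)), hw⟩
            ⟨Sum.inr (spokeE i 1), hsp⟩ :=
          madj_inl_inr.mpr (mem_spokeSym.mpr (Or.inr rfl))
        have adj2 : ((MFG n).induce (UD n i0)ᶜ).Adj ⟨Sum.inr (spokeE i 1), hsp⟩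
            ⟨Sum.inl none, hub_mem⟩ :=
          madj_inr_inl.mpr (mem_spokeSym.mpr (Or.inl rfl))
        exact (adj1.reachable).trans adj2.reachable
    | Sum.inr e =>
      rcases edge_cases e with ⟨i, a, rfl⟩ | ⟨i, rfl⟩
      · have adj1 : ((MFG n).induce (UD n i0)ᶜ).Adj ⟨Sum.inr (spokeE i a), hw⟩
            ⟨Sum.inl none, hub_mem⟩ :=
          madj_inr_inl.mpr (mem_spokeSym.mpr (Or.inl rfl))
        exact adj1.reachable
      · exact absurd (mem_UD.mpr (Or.inr (Or.inl ⟨i, rfl⟩))) hw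
  rw [SimpleGraph.connected_iff]
  exact ⟨fun x y => (reach_hub x).trans (reach_hub y).symm, ⟨⟨Sum.inl none, hub_mem⟩⟩⟩

lemma upper (hn : 2 ≤ n) :
    ∃ D : Set (FW n), IsTOCDomSet (MFG n) D ∧ D.ncard = 2 * n + 1 := by
  haveI : NeZero n := ⟨by omega⟩
  exact ⟨UD n 0, ⟨UD_totalDom 0, UD_conn 0⟩, UD_ncard 0⟩

end Upper

end Stmt18Aux


theorem stmt18 (n : ℕ) (hn : 2 ≤ n) :
    tocDomNum (middleGraph (friendshipGraph n)) = 2 * n + 1 := by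
  obtain ⟨D, hD, hcard⟩ := Stmt18Aux.upper (n := n) hn
  unfold tocDomNum
  apply le_antisymm
  · exact Nat.sInf_le ⟨D, hD, hcard⟩
  · have hne : {k | ∃ D : Set (Option (Fin n × Fin 2) ⊕ (friendshipGraph n).edgeSet),
        IsTOCDomSet (middleGraph (friendshipGraph n)) D ∧ D.ncard = k}.Nonempty :=
      ⟨2 * n + 1, D, hD, hcard⟩
    obtain ⟨D', hD', hcard'⟩ := Nat.sInf_mem hne
    exact hcard' ▸ Stmt18Aux.lower_bound hD'
end

section
/- Let G be a connected graph of order n ≥ 4 with m edges such that the complement Ḡ is also connected. Then 2|Leaf(G)| + 2|Leaf(Ḡ)| ≤ γ_tc(M(G)) + γ_tc(M(Ḡ)) ≤ (n² + 3n − 4)/2. -/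
open SimpleGraph

section Aux

variable {V : Type*}

open Classical in
/-- The pendant neighbour of a leaf (junk value otherwise). -/
noncomputable def pnbr (G : SimpleGraph V) (v : V) : V :=
  if h : ∃ u, G.neighborSet v = {u} then h.choose else v

lemma pnbr_spec {G : SimpleGraph V} {v : V} (hv : v ∈ leafSet G) :
    G.neighborSet v = {pnbr G v} := by
  have hv' : ∃ u, G.neighborSet v = {u} := hv
  rw [pnbr, dif_pos hv']
  exact hv'.choose_spec

lemma adj_pnbr {G : SimpleGraph V} {v : V} (hv : v ∈ leafSet G) :
    G.Adj v (pnbr G v) := by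
  have : pnbr G v ∈ G.neighborSet v := by rw [pnbr_spec hv]; rfl
  exact this

lemma edge_of_leaf {G : SimpleGraph V} {v : V} (hv : v ∈ leafSet G) {e : Sym2 V}
    (he : e ∈ G.edgeSet) (hve : v ∈ e) : e = s(v, pnbr G v) := by
  obtain ⟨w, rfl⟩ := Sym2.mem_iff_exists.mp hve
  have hadj : G.Adj v w := he
  have hw : w ∈ G.neighborSet v := hadj
  rw [pnbr_spec hv, Set.mem_singleton_iff] at hw
  rw [hw]

lemma walk_closed {G : SimpleGraph V} {S : Set V}
    (hS : ∀ a ∈ S, ∀ b, G.Adj a b → b ∈ S) {a b : V} (w : G.Walk a b) (ha : a ∈ S) :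
    b ∈ S := by
  induction w with
  | nil => exact ha
  | cons h _ ih => exact ih (hS _ ha _ h)

lemma no_mutual_leaves [Fintype V] {G : SimpleGraph V} (hG : G.Connected)
    (hn : 4 ≤ Fintype.card V) {v w : V} (hv : G.neighborSet v = {w})
    (hw : G.neighborSet w = {v}) : False := by
  have hsub : (Set.univ : Set V) ⊆ {v, w} := by
    intro x _
    obtain ⟨p⟩ := hG.preconnected v x
    refine walk_closed (S := {v, w}) ?_ p (by left; rfl)
    intro a ha b hab
    rcases ha with rfl | ha
    · right
      have : b ∈ G.neighborSet a := hab
      rw [hv] at this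
      exact this
    · rw [Set.mem_singleton_iff] at ha
      subst ha
      left
      have : b ∈ G.neighborSet a := hab
      rw [hw] at this
      exact this
  have h1 : (Set.univ : Set V).ncard ≤ ({v, w} : Set V).ncard :=
    Set.ncard_le_ncard hsub (Set.toFinite _)
  rw [Set.ncard_univ, Nat.card_eq_fintype_card] at h1
  have h2 : ({v, w} : Set V).ncard ≤ 2 :=
    (Set.ncard_insert_le _ _).trans (by simp)
  omega

lemma pe_injOn [Fintype V] {G : SimpleGraph V} (hG : G.Connected)
    (hn : 4 ≤ Fintype.card V) :
    Set.InjOn (fun v => s(v, pnbr G v)) (leafSet G) := by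
  intro v hv w hw h
  simp only [Sym2.eq_iff] at h
  rcases h with ⟨rfl, _⟩ | ⟨h1, h2⟩
  · rfl
  · exfalso
    exact no_mutual_leaves hG hn (v := v) (w := w)
      (by rw [pnbr_spec hv, h2]) (by rw [pnbr_spec hw, ← h1])

lemma exists_nonleaf [Fintype V] {G : SimpleGraph V} (hG : G.Connected)
    (hn : 4 ≤ Fintype.card V) : ∃ z, z ∉ leafSet G := by
  by_contra h
  push_neg at h
  have : Nonempty V := Fintype.card_pos_iff.mp (by omega)
  obtain ⟨v⟩ := this
  have hv := h v
  have h1 := pnbr_spec hv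
  have hu := h (pnbr G v)
  have h2 := pnbr_spec hu
  have hmem : v ∈ G.neighborSet (pnbr G v) := (adj_pnbr hv).symm
  rw [h2, Set.mem_singleton_iff] at hmem
  exact no_mutual_leaves hG hn h1 (by rw [h2, ← hmem])

lemma connected_exists_adj_of_ne {α : Type*} {H : SimpleGraph α} (hH : H.Connected)
    {a b : α} (hab : a ≠ b) : ∃ c, H.Adj a c := by
  obtain ⟨p⟩ := hH.preconnected a b
  cases p with
  | nil => exact absurd rfl hab
  | cons h _ => exact ⟨_, h⟩

lemma exists_adj [Fintype V] {G : SimpleGraph V} (hG : G.Connected)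
    (hn : 2 ≤ Fintype.card V) (v : V) : ∃ u, G.Adj v u := by
  obtain ⟨w, hw⟩ := Fintype.exists_ne_of_one_lt_card (by omega) v
  exact connected_exists_adj_of_ne hG hw.symm

open Classical in
/-- The edge-vertex of `M(G)` corresponding to the pendant edge of a leaf. -/
noncomputable def leafEdgeV (G : SimpleGraph V) (v : V) : V ⊕ G.edgeSet :=
  if h : v ∈ leafSet G then Sum.inr ⟨s(v, pnbr G v), G.mem_edgeSet.mpr (adj_pnbr h)⟩
  else Sum.inl v

lemma leafEdgeV_isInr {G : SimpleGraph V} {v : V} (hv : v ∈ leafSet G) :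
    ∃ e : G.edgeSet, leafEdgeV G v = Sum.inr e ∧
      (e : Sym2 V) = s(v, pnbr G v) := by
  rw [leafEdgeV, dif_pos hv]
  exact ⟨_, rfl, rfl⟩

lemma leafEdgeV_injOn [Fintype V] {G : SimpleGraph V} (hG : G.Connected)
    (hn : 4 ≤ Fintype.card V) : Set.InjOn (leafEdgeV G) (leafSet G) := by
  intro v hv w hw h
  obtain ⟨e, he, he'⟩ := leafEdgeV_isInr hv
  obtain ⟨f, hf, hf'⟩ := leafEdgeV_isInr hw
  rw [he, hf] at h
  have : (e : Sym2 V) = f := by rw [Sum.inr.injEq] at h; rw [h]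
  rw [he', hf'] at this
  exact pe_injOn hG hn hv hw this

/-- The pendant edge-vertex of any leaf lies in any total dominating set. -/
lemma leafEdgeV_mem_dom [Fintype V] {G : SimpleGraph V} {D : Set (V ⊕ G.edgeSet)}
    (hD : IsTotalDomSet (middleGraph G) D) {v : V} (hv : v ∈ leafSet G) :
    leafEdgeV G v ∈ D := by
  obtain ⟨u, hu, hadj⟩ := hD (Sum.inl v)
  match u with
  | Sum.inl w => exact (hadj : False).elim
  | Sum.inr e =>
    have hve : v ∈ (e : Sym2 V) := hadj
    have : (e : Sym2 V) = s(v, pnbr G v) := edge_of_leaf hv e.2 hve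
    obtain ⟨f, hf, hf'⟩ := leafEdgeV_isInr hv
    have : e = f := Subtype.ext (by rw [this, hf'])
    rw [hf, ← this]
    exact hu

lemma singleton_induce_connected {α : Type*} (H : SimpleGraph α) (x : α) :
    (SimpleGraph.induce ({x} : Set α) H).Connected := by
  rw [connected_iff]
  refine ⟨fun a b => ?_, ⟨⟨x, rfl⟩⟩⟩
  have : a = b := Subtype.ext (a.2.trans b.2.symm)
  exact this ▸ Reachable.refl a

/-- Upper-bound witness: everything except one vertex-vertex. -/
lemma toc_upper_witness [Fintype V] {G : SimpleGraph V} (hG : G.Connected)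
    (hn : 2 ≤ Fintype.card V) :
    ∃ D : Set (V ⊕ G.edgeSet), IsTOCDomSet (middleGraph G) D ∧
      D.ncard = Fintype.card V + G.edgeSet.ncard - 1 := by
  have : Nonempty V := Fintype.card_pos_iff.mp (by omega)
  obtain ⟨v₀⟩ := this
  refine ⟨({Sum.inl v₀} : Set (V ⊕ G.edgeSet))ᶜ, ⟨?_, ?_⟩, ?_⟩
  · rintro (w | e)
    · obtain ⟨u, hu⟩ := exists_adj hG hn w
      refine ⟨Sum.inr ⟨s(w, u), G.mem_edgeSet.mpr hu⟩, by simp, ?_⟩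
      exact Sym2.mem_mk_left w u
    · obtain ⟨e, he⟩ := e
      induction e using Sym2.ind with
      | _ a b =>
        have hab : a ≠ b := (G.mem_edgeSet.mp he).ne
        by_cases ha : a = v₀
        · refine ⟨Sum.inl b, by simp [Set.mem_compl_iff]; exact fun h => hab (ha.trans h.symm), ?_⟩
          exact Sym2.mem_mk_right a b
        · exact ⟨Sum.inl a, by simp [ha], Sym2.mem_mk_left a b⟩
  · rw [compl_compl]
    exact singleton_induce_connected _ _
  · have h := Set.ncard_add_ncard_compl ({Sum.inl v₀} : Set (V ⊕ G.edgeSet))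
    rw [Set.ncard_singleton] at h
    have hcard : Nat.card (V ⊕ G.edgeSet) = Fintype.card V + G.edgeSet.ncard := by
      rw [Nat.card_sum, Nat.card_eq_fintype_card, Nat.card_coe_set_eq]
    omega

/-- Lower bound: any TOC dominating set of `M(G)` has at least `2 |Leaf G|` elements. -/
lemma toc_lower [Fintype V] {G : SimpleGraph V} (hG : G.Connected)
    (hn : 4 ≤ Fintype.card V) {D : Set (V ⊕ G.edgeSet)}
    (hD : IsTOCDomSet (middleGraph G) D) :
    2 * (leafSet G).ncard ≤ D.ncard := by
  classical
  set L := leafSet G with hL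
  have hIm : ∀ x ∈ leafEdgeV G '' L, ∃ e : G.edgeSet, x = Sum.inr e := by
    rintro x ⟨v, hv, rfl⟩
    obtain ⟨e, he, -⟩ := leafEdgeV_isInr hv
    exact ⟨e, he⟩
  have hImD : leafEdgeV G '' L ⊆ D := by
    rintro x ⟨v, hv, rfl⟩
    exact leafEdgeV_mem_dom hD.1 hv
  have hImCard : (leafEdgeV G '' L).ncard = L.ncard :=
    Set.ncard_image_of_injOn (leafEdgeV_injOn hG hn)
  by_cases hall : ∀ v ∈ L, Sum.inl v ∈ D
  · -- all leaf-vertices also in D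
    have hsub : (Sum.inl '' L) ∪ (leafEdgeV G '' L) ⊆ D := by
      rintro x (⟨v, hv, rfl⟩ | hx)
      · exact hall v hv
      · exact hImD hx
    have hdisj : Disjoint (Sum.inl '' L : Set (V ⊕ G.edgeSet)) (leafEdgeV G '' L) := by
      rw [Set.disjoint_left]
      rintro x ⟨v, hv, rfl⟩ hx
      obtain ⟨e, he⟩ := hIm _ hx
      exact Sum.inl_ne_inr he
    have hcard : ((Sum.inl '' L) ∪ (leafEdgeV G '' L)).ncard = 2 * L.ncard := by
      rw [Set.ncard_union_eq hdisj (Set.toFinite _) (Set.toFinite _),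
        Set.ncard_image_of_injective _ Sum.inl_injective, hImCard]
      ring
    calc 2 * L.ncard = ((Sum.inl '' L) ∪ (leafEdgeV G '' L)).ncard := hcard.symm
      _ ≤ D.ncard := Set.ncard_le_ncard hsub (Set.toFinite _)
  · push_neg at hall
    obtain ⟨v, hv, hvD⟩ := hall
    -- then Dᶜ = {inl v}
    have hDc : Dᶜ = {Sum.inl v} := by
      apply Set.eq_of_subset_of_subset
      · intro x hx
        by_contra hne
        have hconn := hD.2
        have haneb : (⟨Sum.inl v, hvD⟩ : ↥(Dᶜ)) ≠ ⟨x, hx⟩ := by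
          intro h
          exact hne (by rw [Set.mem_singleton_iff]; exact (congrArg Subtype.val h).symm)
        obtain ⟨c, hc⟩ := connected_exists_adj_of_ne hconn haneb
        have hadj : (middleGraph G).Adj (Sum.inl v) (c : V ⊕ G.edgeSet) := hc
        match hcv : (c : V ⊕ G.edgeSet) with
        | Sum.inl w => rw [hcv] at hadj; exact (hadj : False).elim
        | Sum.inr e =>
          rw [hcv] at hadj
          have hve : v ∈ (e : Sym2 V) := hadj
          have heq : (e : Sym2 V) = s(v, pnbr G v) := edge_of_leaf hv e.2 hve
          obtain ⟨f, hf, hf'⟩ := leafEdgeV_isInr hv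
          have hef : e = f := Subtype.ext (by rw [heq, hf'])
          have : Sum.inr e ∈ D := by
            rw [hef, ← hf]; exact leafEdgeV_mem_dom hD.1 hv
          have hcD : (c : V ⊕ G.edgeSet) ∈ Dᶜ := c.2
          rw [hcv] at hcD
          exact hcD this
      · intro x hx
        rw [Set.mem_singleton_iff] at hx
        rw [hx]
        exact hvD
    have hDeq : D = ({Sum.inl v} : Set (V ⊕ G.edgeSet))ᶜ := by
      rw [← hDc, compl_compl]
    obtain ⟨z, hz⟩ := exists_nonleaf hG hn
    set T : Set (V ⊕ G.edgeSet) :=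
      insert (Sum.inl z) ((Sum.inl '' (L \ {v})) ∪ (leafEdgeV G '' L)) with hT
    have hTD : T ⊆ D := by
      rw [hDeq]
      rintro x (rfl | (⟨w, hw, rfl⟩ | hx))
      · simp only [Set.mem_compl_iff, Set.mem_singleton_iff]
        intro h
        exact hz (by rw [Sum.inl.injEq] at h; rw [h]; exact hv)
      · simp only [Set.mem_compl_iff, Set.mem_singleton_iff]
        intro h
        rw [Sum.inl.injEq] at h
        exact hw.2 h
      · obtain ⟨e, he⟩ := hIm _ hx
        rw [he]
        simp
    have hdisj : Disjoint (Sum.inl '' (L \ {v}) : Set (V ⊕ G.edgeSet)) (leafEdgeV G '' L) := by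
      rw [Set.disjoint_left]
      rintro x ⟨w, hw, rfl⟩ hx
      obtain ⟨e, he⟩ := hIm _ hx
      exact Sum.inl_ne_inr he
    have hzT : Sum.inl z ∉ (Sum.inl '' (L \ {v})) ∪ (leafEdgeV G '' L) := by
      rintro (⟨w, hw, hwe⟩ | hx)
      · rw [Sum.inl.injEq] at hwe
        exact hz (hwe ▸ hw.1)
      · obtain ⟨e, he⟩ := hIm _ hx
        exact Sum.inl_ne_inr he
    have hLpos : 1 ≤ L.ncard := (Set.ncard_pos (Set.toFinite _)).mpr ⟨v, hv⟩
    have hTcard : T.ncard = 2 * L.ncard := by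
      rw [hT, Set.ncard_insert_of_notMem hzT (Set.Finite.union (Set.toFinite _) (Set.toFinite _)),
        Set.ncard_union_eq hdisj (Set.toFinite _) (Set.toFinite _),
        Set.ncard_image_of_injective _ Sum.inl_injective, hImCard,
        Set.ncard_diff_singleton_of_mem hv]
      omega
    calc 2 * L.ncard = T.ncard := hTcard.symm
      _ ≤ D.ncard := Set.ncard_le_ncard hTD (Set.toFinite _)

lemma toc_num_bounds [Fintype V] {G : SimpleGraph V} (hG : G.Connected)
    (hn : 4 ≤ Fintype.card V) :
    2 * (leafSet G).ncard ≤ tocDomNum (middleGraph G) ∧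
      tocDomNum (middleGraph G) ≤ Fintype.card V + G.edgeSet.ncard - 1 := by
  obtain ⟨D₀, hD₀, hcard₀⟩ := toc_upper_witness hG (by omega)
  have hne : {k | ∃ D : Set (V ⊕ G.edgeSet),
      IsTOCDomSet (middleGraph G) D ∧ D.ncard = k}.Nonempty := ⟨_, D₀, hD₀, rfl⟩
  constructor
  · obtain ⟨D, hD, hDk⟩ := Nat.sInf_mem hne
    rw [tocDomNum, ← hDk]
    exact toc_lower hG hn hD
  · rw [tocDomNum, ← hcard₀]
    exact Nat.sInf_le ⟨D₀, hD₀, rfl⟩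

lemma edge_ncard_compl [Fintype V] (G : SimpleGraph V) :
    G.edgeSet.ncard + Gᶜ.edgeSet.ncard = (Fintype.card V).choose 2 := by
  classical
  have hdisj : Disjoint G.edgeSet Gᶜ.edgeSet :=
    SimpleGraph.disjoint_edgeSet.mpr disjoint_compl_right
  have hunion : G.edgeSet ∪ Gᶜ.edgeSet = (⊤ : SimpleGraph V).edgeSet := by
    rw [← SimpleGraph.edgeSet_sup, sup_compl_eq_top]
  have h := Set.ncard_union_eq hdisj (Set.toFinite _) (Set.toFinite _)
  rw [hunion] at h
  rw [← h, ← Nat.card_coe_set_eq, Nat.card_eq_fintype_card,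
    ← SimpleGraph.edgeFinset_card]
  exact SimpleGraph.card_edgeFinset_top_eq_card_choose_two

end Aux

theorem stmt19 {V : Type*} [Fintype V] (G : SimpleGraph V) (hG : G.Connected)
    (hGc : Gᶜ.Connected) (hn : 4 ≤ Fintype.card V) :
    2 * (leafSet G).ncard + 2 * (leafSet Gᶜ).ncard ≤
        tocDomNum (middleGraph G) + tocDomNum (middleGraph Gᶜ) ∧
      tocDomNum (middleGraph G) + tocDomNum (middleGraph Gᶜ) ≤
        (Fintype.card V ^ 2 + 3 * Fintype.card V - 4) / 2 := by
  obtain ⟨hlo₁, hhi₁⟩ := toc_num_bounds hG hn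
  obtain ⟨hlo₂, hhi₂⟩ := toc_num_bounds hGc hn
  refine ⟨by omega, ?_⟩
  have hsum := edge_ncard_compl G
  set n := Fintype.card V with hn'
  have hp : n ^ 2 = n * n := sq n
  have hmul : n * (n - 1) = n * n - n := by
    cases n with
    | zero => simp
    | succ k =>
      have h : (k + 1) * (k + 1) = (k + 1) * k + (k + 1) := by ring
      rw [Nat.add_sub_cancel, h, Nat.add_sub_cancel]
  have hch : 2 * (n.choose 2) = n * n - n := by
    rw [Nat.choose_two_right, Nat.two_mul_div_two_of_even (Nat.even_mul_pred_self n), hmul]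
  have hle : n ≤ n * n := Nat.le_mul_of_pos_left n (by omega)
  rw [hp]
  generalize hq : n * n = p at hch hle ⊢
  omega
end
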